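/- arXiv:1212.5287 — 3 statements merged into one kernel-verified Lean document; each statement's English description precedes it below -/
import Mathlib

section
/- Let u : ℝ² × (0,∞) → ℝ be twice continuously differentiable in space and once in time, and suppose u solves the driftless Fokker–Planck equation ∂u/∂t = (σ₁²/2)∂²u/∂x₁² + (σ₂²/2)∂²u/∂x₂² + σ₁σ₂ρ ∂²u/∂x₁∂x₂. Define constants K₁ = (σ₂μ₁ − σ₁μ₂ρ)/(σ₁²σ₂(1−ρ²)), K₂ = (σ₁μ₂ − σ₂μ₁ρ)/(σ₁σ₂²(1−ρ²)), K₃ = σ₁σ₂√(1−ρ²), c = (σ₁²μ₂² − 2μ₁μ₂σ₁σ₂ρ + σ₂²μ₁²)/(2K₃²), and set v(x₁,x₂,t) = exp(K₁(x₁ − x₀₁) + K₂(x₂ − x₀₂) − c·t) · u(x₁,x₂,t). Then v solves the Fokker–Planck equation with drift: ∂v/∂t = (σ₁²/2)∂²v/∂x₁² + (σ₂²/2)∂²v/∂x₂² + σ₁σ₂ρ ∂²v/∂x₁∂x₂ − μ₁ ∂v/∂x₁ − μ₂ ∂v/∂x₂. -/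
lemma expmul1 (k a b₁ b₂ : ℝ) {f : ℝ → ℝ} {f' z : ℝ} (hf : HasDerivAt f f' z) :
    HasDerivAt (fun s => Real.exp (k * (s - a) + b₁ - b₂) * f s)
      (Real.exp (k * (z - a) + b₁ - b₂) * (k * f z + f')) z := by
  have h0 : HasDerivAt (fun s : ℝ => k * (s - a) + b₁ - b₂) k z := by
    simpa using ((((hasDerivAt_id z).sub_const a).const_mul k).add_const b₁).sub_const b₂
  have : HasDerivAt (fun s => Real.exp (k * (s - a) + b₁ - b₂) * f s) _ z := h0.exp.mul hf
  convert this using 1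
  ring

lemma expmul2 (k a b₁ b₂ : ℝ) {f : ℝ → ℝ} {f' z : ℝ} (hf : HasDerivAt f f' z) :
    HasDerivAt (fun s => Real.exp (b₁ + k * (s - a) - b₂) * f s)
      (Real.exp (b₁ + k * (z - a) - b₂) * (k * f z + f')) z := by
  have h0 : HasDerivAt (fun s : ℝ => b₁ + k * (s - a) - b₂) k z := by
    simpa using ((((hasDerivAt_id z).sub_const a).const_mul k).const_add b₁).sub_const b₂
  have : HasDerivAt (fun s => Real.exp (b₁ + k * (s - a) - b₂) * f s) _ z := h0.exp.mul hf
  convert this using 1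
  ring

lemma expmul3 (C cc : ℝ) {f : ℝ → ℝ} {f' z : ℝ} (hf : HasDerivAt f f' z) :
    HasDerivAt (fun s => Real.exp (C - cc * s) * f s)
      (Real.exp (C - cc * z) * (f' - cc * f z)) z := by
  have h0 : HasDerivAt (fun s : ℝ => C - cc * s) (-cc) z := by
    simpa using ((hasDerivAt_id z).const_mul cc).const_sub C
  have : HasDerivAt (fun s => Real.exp (C - cc * s) * f s) _ z := h0.exp.mul hf
  convert this using 1
  ring

theorem stmt_12 (σ₁ σ₂ ρ μ₁ μ₂ x₀₁ x₀₂ : ℝ) (hσ₁ : 0 < σ₁) (hσ₂ : 0 < σ₂)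
    (hρ : -1 < ρ ∧ ρ < 1)
    (u : ℝ → ℝ → ℝ → ℝ)
    (hu_smooth : ContDiff ℝ 2 (fun p : ℝ × ℝ × ℝ => u p.1 p.2.1 p.2.2))
    (hu : ∀ x₁ x₂ t : ℝ, 0 < t →
      deriv (fun τ => u x₁ x₂ τ) t =
        σ₁ ^ 2 / 2 * deriv (deriv (fun z => u z x₂ t)) x₁ +
        σ₂ ^ 2 / 2 * deriv (deriv (fun z => u x₁ z t)) x₂ +
        σ₁ * σ₂ * ρ * deriv (fun y => deriv (fun z => u y z t) x₂) x₁) :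
    let K₁ : ℝ := (σ₂ * μ₁ - σ₁ * μ₂ * ρ) / (σ₁ ^ 2 * σ₂ * (1 - ρ ^ 2))
    let K₂ : ℝ := (σ₁ * μ₂ - σ₂ * μ₁ * ρ) / (σ₁ * σ₂ ^ 2 * (1 - ρ ^ 2))
    let K₃ : ℝ := σ₁ * σ₂ * Real.sqrt (1 - ρ ^ 2)
    let c : ℝ := (σ₁ ^ 2 * μ₂ ^ 2 - 2 * μ₁ * μ₂ * σ₁ * σ₂ * ρ + σ₂ ^ 2 * μ₁ ^ 2) / (2 * K₃ ^ 2)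
    let v : ℝ → ℝ → ℝ → ℝ := fun x₁ x₂ t =>
      Real.exp (K₁ * (x₁ - x₀₁) + K₂ * (x₂ - x₀₂) - c * t) * u x₁ x₂ t
    ∀ x₁ x₂ t : ℝ, 0 < t →
      deriv (fun τ => v x₁ x₂ τ) t =
        σ₁ ^ 2 / 2 * deriv (deriv (fun z => v z x₂ t)) x₁ +
        σ₂ ^ 2 / 2 * deriv (deriv (fun z => v x₁ z t)) x₂ +
        σ₁ * σ₂ * ρ * deriv (fun y => deriv (fun z => v y z t) x₂) x₁ -
        μ₁ * deriv (fun z => v z x₂ t) x₁ -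
        μ₂ * deriv (fun z => v x₁ z t) x₂ := by
  intro K₁ K₂ K₃ c v x₁ x₂ t ht
  have hρ2 : (0:ℝ) < 1 - ρ ^ 2 := by nlinarith [hρ.1, hρ.2]
  -- smoothness setup
  set F : ℝ × ℝ × ℝ → ℝ := fun p => u p.1 p.2.1 p.2.2 with hFdef
  have hF : ContDiff ℝ 2 F := hu_smooth
  have hFd : Differentiable ℝ F := hF.differentiable (by norm_num)
  set P1 : ℝ × ℝ × ℝ → ℝ := fun p => fderiv ℝ F p ((1:ℝ),(0:ℝ),(0:ℝ)) with hP1def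
  set P2 : ℝ × ℝ × ℝ → ℝ := fun p => fderiv ℝ F p ((0:ℝ),(1:ℝ),(0:ℝ)) with hP2def
  set P3 : ℝ × ℝ × ℝ → ℝ := fun p => fderiv ℝ F p ((0:ℝ),(0:ℝ),(1:ℝ)) with hP3def
  have hfC : ContDiff ℝ 1 (fderiv ℝ F) := hF.fderiv_right (by norm_num)
  have hP1d : Differentiable ℝ P1 := (hfC.clm_apply contDiff_const).differentiable one_ne_zero
  have hP2d : Differentiable ℝ P2 := (hfC.clm_apply contDiff_const).differentiable one_ne_zero
  -- lines
  have hline1 : ∀ (a b z : ℝ), HasDerivAt (fun s => ((s, a, b) : ℝ × ℝ × ℝ))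
      ((1:ℝ),(0:ℝ),(0:ℝ)) z :=
    fun a b z => HasDerivAt.prodMk (hasDerivAt_id z) (hasDerivAt_const z (a, b))
  have hline2 : ∀ (a b z : ℝ), HasDerivAt (fun s => ((a, s, b) : ℝ × ℝ × ℝ))
      ((0:ℝ),(1:ℝ),(0:ℝ)) z :=
    fun a b z => HasDerivAt.prodMk (hasDerivAt_const z a) (HasDerivAt.prodMk (hasDerivAt_id z) (hasDerivAt_const z b))
  have hline3 : ∀ (a b z : ℝ), HasDerivAt (fun s => ((a, b, s) : ℝ × ℝ × ℝ))
      ((0:ℝ),(0:ℝ),(1:ℝ)) z :=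
    fun a b z => HasDerivAt.prodMk (hasDerivAt_const z a) (HasDerivAt.prodMk (hasDerivAt_const z b) (hasDerivAt_id z))
  -- first partials of u
  have hu1 : ∀ (a b z : ℝ), HasDerivAt (fun s => u s a b) (P1 (z, a, b)) z := fun a b z =>
    ((hFd (z, a, b)).hasFDerivAt.comp_hasDerivAt z (hline1 a b z) :)
  have hu2 : ∀ (a b z : ℝ), HasDerivAt (fun s => u a s b) (P2 (a, z, b)) z := fun a b z =>
    ((hFd (a, z, b)).hasFDerivAt.comp_hasDerivAt z (hline2 a b z) :)
  have hu3 : ∀ (a b z : ℝ), HasDerivAt (fun s => u a b s) (P3 (a, b, z)) z := fun a b z =>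
    ((hFd (a, b, z)).hasFDerivAt.comp_hasDerivAt z (hline3 a b z) :)
  -- second partials
  have hP11 : ∀ (a b z : ℝ), HasDerivAt (fun s => P1 (s, a, b))
      (fderiv ℝ P1 (z, a, b) ((1:ℝ),(0:ℝ),(0:ℝ))) z := fun a b z =>
    ((hP1d (z, a, b)).hasFDerivAt.comp_hasDerivAt z (hline1 a b z) :)
  have hP21 : ∀ (a b z : ℝ), HasDerivAt (fun s => P2 (s, a, b))
      (fderiv ℝ P2 (z, a, b) ((1:ℝ),(0:ℝ),(0:ℝ))) z := fun a b z =>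
    ((hP2d (z, a, b)).hasFDerivAt.comp_hasDerivAt z (hline1 a b z) :)
  have hP22 : ∀ (a b z : ℝ), HasDerivAt (fun s => P2 (a, s, b))
      (fderiv ℝ P2 (a, z, b) ((0:ℝ),(1:ℝ),(0:ℝ))) z := fun a b z =>
    ((hP2d (a, z, b)).hasFDerivAt.comp_hasDerivAt z (hline2 a b z) :)
  -- scalar abbreviations at the point
  set U : ℝ := u x₁ x₂ t with hU
  set U1 : ℝ := P1 (x₁, x₂, t) with hU1
  set U2 : ℝ := P2 (x₁, x₂, t) with hU2
  set U3 : ℝ := P3 (x₁, x₂, t) with hU3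
  set Q11 : ℝ := fderiv ℝ P1 (x₁, x₂, t) ((1:ℝ),(0:ℝ),(0:ℝ)) with hQ11
  set Q22 : ℝ := fderiv ℝ P2 (x₁, x₂, t) ((0:ℝ),(1:ℝ),(0:ℝ)) with hQ22
  set Q12 : ℝ := fderiv ℝ P2 (x₁, x₂, t) ((1:ℝ),(0:ℝ),(0:ℝ)) with hQ12
  -- rewrite hypothesis PDE for u
  have hu' := hu x₁ x₂ t ht
  have e1 : deriv (fun z => u z x₂ t) = fun z => P1 (z, x₂, t) :=
    funext fun z => (hu1 x₂ t z).deriv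
  have e2 : deriv (fun z => u x₁ z t) = fun z => P2 (x₁, z, t) :=
    funext fun z => (hu2 x₁ t z).deriv
  have e3 : (fun y => deriv (fun z => u y z t) x₂) = fun y => P2 (y, x₂, t) :=
    funext fun y => (hu2 y t x₂).deriv
  rw [(hu3 x₁ x₂ t).deriv, e1, e2, e3, (hP11 x₂ t x₁).deriv, (hP22 x₁ t x₂).deriv,
    (hP21 x₂ t x₁).deriv] at hu'
  -- now compute derivatives of v
  unfold v
  -- time derivative
  have hvt := expmul3 (K₁ * (x₁ - x₀₁) + K₂ * (x₂ - x₀₂)) c (hu3 x₁ x₂ t)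
  -- x₁ derivatives
  have hv1 : ∀ z : ℝ, HasDerivAt (fun s => Real.exp (K₁ * (s - x₀₁) + K₂ * (x₂ - x₀₂) - c * t) * u s x₂ t)
      (Real.exp (K₁ * (z - x₀₁) + K₂ * (x₂ - x₀₂) - c * t) * (K₁ * u z x₂ t + P1 (z, x₂, t))) z :=
    fun z => expmul1 K₁ x₀₁ (K₂ * (x₂ - x₀₂)) (c * t) (hu1 x₂ t z)
  have hdv1 : deriv (fun s => Real.exp (K₁ * (s - x₀₁) + K₂ * (x₂ - x₀₂) - c * t) * u s x₂ t)
      = fun z => Real.exp (K₁ * (z - x₀₁) + K₂ * (x₂ - x₀₂) - c * t) * (K₁ * u z x₂ t + P1 (z, x₂, t)) :=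
    funext fun z => (hv1 z).deriv
  have hv11 := expmul1 K₁ x₀₁ (K₂ * (x₂ - x₀₂)) (c * t)
    (((hu1 x₂ t x₁).const_mul K₁).fun_add (hP11 x₂ t x₁))
  -- x₂ derivatives
  have hv2 : ∀ z : ℝ, HasDerivAt (fun s => Real.exp (K₁ * (x₁ - x₀₁) + K₂ * (s - x₀₂) - c * t) * u x₁ s t)
      (Real.exp (K₁ * (x₁ - x₀₁) + K₂ * (z - x₀₂) - c * t) * (K₂ * u x₁ z t + P2 (x₁, z, t))) z :=
    fun z => expmul2 K₂ x₀₂ (K₁ * (x₁ - x₀₁)) (c * t) (hu2 x₁ t z)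
  have hdv2 : deriv (fun s => Real.exp (K₁ * (x₁ - x₀₁) + K₂ * (s - x₀₂) - c * t) * u x₁ s t)
      = fun z => Real.exp (K₁ * (x₁ - x₀₁) + K₂ * (z - x₀₂) - c * t) * (K₂ * u x₁ z t + P2 (x₁, z, t)) :=
    funext fun z => (hv2 z).deriv
  have hv22 := expmul2 K₂ x₀₂ (K₁ * (x₁ - x₀₁)) (c * t)
    (((hu2 x₁ t x₂).const_mul K₂).fun_add (hP22 x₁ t x₂))
  -- mixed derivative
  have hmixin : (fun y => deriv (fun z => Real.exp (K₁ * (y - x₀₁) + K₂ * (z - x₀₂) - c * t) * u y z t) x₂)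
      = fun y => Real.exp (K₁ * (y - x₀₁) + K₂ * (x₂ - x₀₂) - c * t) * (K₂ * u y x₂ t + P2 (y, x₂, t)) :=
    funext fun y => (expmul2 K₂ x₀₂ (K₁ * (y - x₀₁)) (c * t) (hu2 y t x₂)).deriv
  have hmixout := expmul1 K₁ x₀₁ (K₂ * (x₂ - x₀₂)) (c * t)
    (((hu1 x₂ t x₁).const_mul K₂).fun_add (hP21 x₂ t x₁))
  rw [hvt.deriv, (hv1 x₁).deriv, (hv2 x₂).deriv, hdv1, hdv2, hmixin, hv11.deriv, hv22.deriv,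
    hmixout.deriv, hu']
  -- algebraic identity
  have hσ₁' : σ₁ ≠ 0 := ne_of_gt hσ₁
  have hσ₂' : σ₂ ≠ 0 := ne_of_gt hσ₂
  have hρ2' : (1:ℝ) - ρ ^ 2 ≠ 0 := ne_of_gt hρ2
  have h1 : σ₁ ^ 2 * K₁ + σ₁ * σ₂ * ρ * K₂ - μ₁ = 0 := by
    unfold K₁ K₂
    field_simp
    ring
  have h2 : σ₂ ^ 2 * K₂ + σ₁ * σ₂ * ρ * K₁ - μ₂ = 0 := by
    unfold K₁ K₂
    field_simp
    ring
  have hc : σ₁ ^ 2 / 2 * K₁ ^ 2 + σ₂ ^ 2 / 2 * K₂ ^ 2 + σ₁ * σ₂ * ρ * K₁ * K₂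
      - μ₁ * K₁ - μ₂ * K₂ + c = 0 := by
    unfold c K₃ K₁ K₂
    rw [mul_pow, mul_pow, Real.sq_sqrt hρ2.le]
    field_simp
    ring
  clear_value v c K₃ K₂ K₁
  set E : ℝ := Real.exp (K₁ * (x₁ - x₀₁) + K₂ * (x₂ - x₀₂) - c * t) with hE
  linear_combination (-(E * U)) * hc + (-(E * U1)) * h1 + (-(E * U2)) * h2
end

section
/- Let g : (−∞, B] → ℝ be nonnegative, monotone nondecreasing, and integrable on (−∞, B]. Then for every r > 0, the right Riemann sum r·Σ_{u=1}^{∞} g(B − u r) converges, and |∫_{−∞}^{B} g(y) dy − r·Σ_{u=1}^{∞} g(B − u r)| ≤ r·g(B). -/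
open MeasureTheory

theorem stmt_13 (B : ℝ) (g : ℝ → ℝ)
    (hg_nonneg : ∀ x ≤ B, 0 ≤ g x)
    (hg_mono : MonotoneOn g (Set.Iic B))
    (hg_int : IntegrableOn g (Set.Iic B)) :
    ∀ r : ℝ, 0 < r →
      Summable (fun u : ℕ => g (B - (u + 1) * r)) ∧
      |(∫ y in Set.Iic B, g y) - r * ∑' u : ℕ, g (B - (u + 1) * r)| ≤ r * g B := by
  intro r hr
  set s : ℕ → Set ℝ := fun u => Set.Ioc (B - ((u : ℝ) + 1) * r) (B - (u : ℝ) * r) with hs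
  have hmeas : ∀ u, MeasurableSet (s u) := fun u => measurableSet_Ioc
  have key : ∀ u v : ℕ, u < v → Disjoint (s u) (s v) := by
    intro u v h
    simp only [hs, Set.disjoint_left]
    intro x hx hx'
    have h1 : B - ((u : ℝ) + 1) * r < x := (Set.mem_Ioc.mp hx).1
    have h2 : x ≤ B - (v : ℝ) * r := (Set.mem_Ioc.mp hx').2
    have h3 : ((u : ℝ) + 1) ≤ (v : ℝ) := by exact_mod_cast h
    nlinarith
  have hdisj : Pairwise (Function.onFun Disjoint s) := by
    intro u v huv
    rcases lt_or_gt_of_ne huv with h | h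
    · exact key u v h
    · exact (key v u h).symm
  have hsub : ∀ u, s u ⊆ Set.Iic B := by
    intro u x hx
    have h1 : x ≤ B - (u : ℝ) * r := (Set.mem_Ioc.mp hx).2
    have : (0:ℝ) ≤ (u : ℝ) * r := mul_nonneg (Nat.cast_nonneg u) hr.le
    simp only [Set.mem_Iic]; linarith
  have hunion : (⋃ u, s u) = Set.Iic B := by
    ext x
    simp only [Set.mem_iUnion, hs, Set.mem_Ioc, Set.mem_Iic]
    constructor
    · rintro ⟨u, _, h2⟩
      have : (0:ℝ) ≤ (u : ℝ) * r := mul_nonneg (Nat.cast_nonneg u) hr.le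
      linarith
    · intro hx
      refine ⟨⌊(B - x)/r⌋₊, ?_, ?_⟩
      · have h1 : (B - x)/r < ⌊(B - x)/r⌋₊ + 1 := Nat.lt_floor_add_one _
        have := (div_lt_iff₀ hr).mp h1
        linarith
      · have h0 : (0:ℝ) ≤ (B - x)/r := div_nonneg (by linarith) hr.le
        have h1 : (⌊(B - x)/r⌋₊ : ℝ) ≤ (B - x)/r := Nat.floor_le h0
        have := (le_div_iff₀ hr).mp h1
        linarith
  have hint : ∀ u, IntegrableOn g (s u) := fun u => hg_int.mono_set (hsub u)
  have hvol : ∀ u : ℕ, (volume (s u)).toReal = r := by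
    intro u
    simp only [hs, Real.volume_Ioc]
    rw [ENNReal.toReal_ofReal (by nlinarith [Nat.cast_nonneg (α := ℝ) u] : (0:ℝ) ≤ B - (u:ℝ)*r - (B - ((u:ℝ)+1)*r))]
    ring
  have hmemB : ∀ u : ℕ, B - ((u : ℝ) + 1) * r ≤ B := by
    intro u
    nlinarith [Nat.cast_nonneg (α := ℝ) u]
  have hlow : ∀ u : ℕ, r * g (B - ((u : ℝ) + 1) * r) ≤ ∫ y in s u, g y := by
    intro u
    have h1 : (∫ _ in s u, g (B - ((u : ℝ) + 1) * r)) = r * g (B - ((u : ℝ) + 1) * r) := by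
      rw [setIntegral_const, measureReal_def, hvol, smul_eq_mul]
    rw [← h1]
    refine setIntegral_mono_on ((integrableOn_const_iff enorm_ne_top).mpr (Or.inr ?_)) (hint u) (hmeas u) ?_
    · simp [hs, Real.volume_Ioc, ENNReal.ofReal_lt_top]
    · intro x hx
      exact hg_mono (hmemB u) (hsub u hx) (le_of_lt (Set.mem_Ioc.mp hx).1)
  have hup : ∀ u : ℕ, (∫ y in s u, g y) ≤ r * g (B - (u : ℝ) * r) := by
    intro u
    have hmem : B - (u : ℝ) * r ≤ B := by nlinarith [Nat.cast_nonneg (α := ℝ) u]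
    have h1 : (∫ _ in s u, g (B - (u : ℝ) * r)) = r * g (B - (u : ℝ) * r) := by
      rw [setIntegral_const, measureReal_def, hvol, smul_eq_mul]
    rw [← h1]
    refine setIntegral_mono_on (hint u) ((integrableOn_const_iff enorm_ne_top).mpr (Or.inr ?_)) (hmeas u) ?_
    · simp [hs, Real.volume_Ioc, ENNReal.ofReal_lt_top]
    · intro x hx
      exact hg_mono (hsub u hx) hmem (Set.mem_Ioc.mp hx).2
  have hHasSum : HasSum (fun u => ∫ y in s u, g y) (∫ y in Set.Iic B, g y) := by
    have := MeasureTheory.hasSum_integral_iUnion hmeas hdisj (hunion ▸ hg_int)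
    rwa [hunion] at this
  have hsumI : Summable (fun u => ∫ y in s u, g y) := hHasSum.summable
  have haNN : ∀ u : ℕ, 0 ≤ g (B - ((u : ℝ) + 1) * r) := fun u => hg_nonneg _ (hmemB u)
  have hsumra : Summable (fun u : ℕ => r * g (B - ((u : ℝ) + 1) * r)) := by
    refine Summable.of_nonneg_of_le (fun u => mul_nonneg hr.le (haNN u)) hlow hsumI
  have hsuma : Summable (fun u : ℕ => g (B - ((u : ℝ) + 1) * r)) := by
    have := hsumra.mul_left r⁻¹
    simpa [← mul_assoc, inv_mul_cancel₀ hr.ne'] using this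
  refine ⟨hsuma, ?_⟩
  have hIge : r * ∑' u : ℕ, g (B - ((u : ℝ) + 1) * r) ≤ ∫ y in Set.Iic B, g y := by
    rw [← tsum_mul_left]
    calc (∑' u : ℕ, r * g (B - ((u : ℝ) + 1) * r)) ≤ ∑' u, ∫ y in s u, g y :=
          Summable.tsum_le_tsum hlow hsumra hsumI
      _ = ∫ y in Set.Iic B, g y := hHasSum.tsum_eq
  have hsumb : Summable (fun u : ℕ => g (B - (u : ℝ) * r)) := by
    rw [← summable_nat_add_iff 1]
    convert hsuma using 2 with u
    push_cast
    rfl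
    push_cast
    ring
  have hIle : (∫ y in Set.Iic B, g y) ≤ r * g B + r * ∑' u : ℕ, g (B - ((u : ℝ) + 1) * r) := by
    have h1 : (∫ y in Set.Iic B, g y) ≤ ∑' u : ℕ, r * g (B - (u : ℝ) * r) := by
      rw [← hHasSum.tsum_eq]
      exact Summable.tsum_le_tsum hup hsumI (hsumb.mul_left r)
    have h2 : (∑' u : ℕ, g (B - (u : ℝ) * r))
        = g B + ∑' u : ℕ, g (B - ((u : ℝ) + 1) * r) := by
      rw [Summable.tsum_eq_zero_add hsumb]
      congr 1
      · norm_num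
      · apply tsum_congr
        intro u
        push_cast
        ring_nf
    rw [tsum_mul_left, h2] at h1
    linarith [h1]
  rw [abs_le]
  constructor <;> [linarith; linarith]
end

section
/- Let α > 0, n ∈ ℕ₊, and define φ(x₁) ∈ (0, α) for x₁ < B₁ (with fixed x₂ < B₂) by r̄ cos φ = σ₂(B₁−x₁) − σ₁ρ(B₂−x₂), r̄ sin φ = σ₁√(1−ρ²)(B₂−x₂), where r̄ = √(σ₁²(B₂−x₂)² + σ₂²(B₁−x₁)² − 2σ₁σ₂ρ(B₁−x₁)(B₂−x₂)). Let also g(x₁) = 1 − exp(2(B₁−x₀₁)(x₁−B₁)/(σ₁²t)) for fixed B₁ > x₀₁, σ₁ > 0, t > 0. Then lim_{x₁→B₁⁻} sin(nπφ(x₁)/α) / g(x₁) = (−1)^{n+1} · n · σ₁σ₂π√(1−ρ²)·t / (2α(B₂−x₂)(B₁−x₀₁)). -/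
open Filter Topology

lemma arg_aux (u v : ℝ) (hv : 0 < v) :
    Complex.arg ((u : ℂ) + (v : ℝ) * Complex.I) = Real.pi / 2 - Real.arctan (u / v) := by
  have h1 : -(Real.pi / 2) < Real.arctan (u / v) := Real.neg_pi_div_two_lt_arctan _
  have h2 : Real.arctan (u / v) < Real.pi / 2 := Real.arctan_lt_pi_div_two _
  have hpi := Real.pi_pos
  have hr : 0 < Real.sqrt (u ^ 2 + v ^ 2) := Real.sqrt_pos.2 (by positivity)
  have hs : Real.sqrt (1 + (u / v) ^ 2) = Real.sqrt (u ^ 2 + v ^ 2) / v := by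
    rw [show (1 : ℝ) + (u / v) ^ 2 = (u ^ 2 + v ^ 2) / v ^ 2 from by field_simp; ring,
      Real.sqrt_div (by positivity), Real.sqrt_sq hv.le]
  set θ := Real.pi / 2 - Real.arctan (u / v) with hθ
  have hcos : Real.cos θ = Real.sin (Real.arctan (u / v)) := Real.cos_pi_div_two_sub _
  have hsin : Real.sin θ = Real.cos (Real.arctan (u / v)) := Real.sin_pi_div_two_sub _
  have key : (u : ℂ) + (v : ℝ) * Complex.I =
      (Real.sqrt (u ^ 2 + v ^ 2) : ℝ) * (Real.cos θ + Real.sin θ * Complex.I) := by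
    have hre : Real.sqrt (u ^ 2 + v ^ 2) * Real.cos θ = u := by
      rw [hcos, Real.sin_arctan, hs]
      field_simp
    have him : Real.sqrt (u ^ 2 + v ^ 2) * Real.sin θ = v := by
      rw [hsin, Real.cos_arctan, hs]
      field_simp
    apply Complex.ext <;>
      simp [Complex.cos_ofReal_re, Complex.sin_ofReal_re, hre, him]
  rw [key]
  rw [show ((Real.cos θ : ℝ) : ℂ) + (Real.sin θ : ℝ) * Complex.I
      = Complex.cos θ + Complex.sin θ * Complex.I by
    rw [Complex.ofReal_cos, Complex.ofReal_sin]]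
  have hb1 : -Real.pi < θ := by rw [hθ]; linarith
  have hb2 : θ ≤ Real.pi := by rw [hθ]; linarith
  exact Complex.arg_mul_cos_add_sin_mul_I hr ⟨hb1, hb2⟩

lemma lhopital_aux {f g : ℝ → ℝ} {a f' g' : ℝ} (hf : HasDerivAt f f' a)
    (hg : HasDerivAt g g' a) (hf0 : f a = 0) (hg0 : g a = 0) (hg' : g' ≠ 0) :
    Filter.Tendsto (fun x => f x / g x) (𝓝[<] a) (𝓝 (f' / g')) := by
  have hsf : Tendsto (slope f a) (𝓝[≠] a) (𝓝 f') := hasDerivAt_iff_tendsto_slope.mp hf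
  have hsg : Tendsto (slope g a) (𝓝[≠] a) (𝓝 g') := hasDerivAt_iff_tendsto_slope.mp hg
  have hdiv : Tendsto (fun x => slope f a x / slope g a x) (𝓝[≠] a) (𝓝 (f' / g')) :=
    hsf.div hsg hg'
  have hmono : 𝓝[<] a ≤ 𝓝[≠] a := nhdsWithin_mono a fun x hx => ne_of_lt hx
  refine Tendsto.congr' ?_ (hdiv.mono_left hmono)
  filter_upwards [self_mem_nhdsWithin] with x (hx : x < a)
  have hxa : x - a ≠ 0 := sub_ne_zero.2 (ne_of_lt hx)
  rw [slope_def_field, slope_def_field, hf0, hg0, sub_zero, sub_zero,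
    div_div_div_comm, div_self hxa, div_one]

theorem stmt_16 (σ₁ σ₂ ρ α B₁ B₂ x₀₁ x₂ t : ℝ) (n : ℕ) (hn : 1 ≤ n)
    (hσ₁ : 0 < σ₁) (hσ₂ : 0 < σ₂) (hρ : -1 < ρ ∧ ρ < 1)
    (hα : 0 < α ∧ α < Real.pi) (hcos : Real.cos α = -ρ)
    (hsin : Real.sin α = Real.sqrt (1 - ρ ^ 2))
    (hx₂ : x₂ < B₂) (hB₁ : x₀₁ < B₁) (ht : 0 < t) :
    let φ : ℝ → ℝ := fun x₁ =>
      Complex.arg ((σ₂ * (B₁ - x₁) - σ₁ * ρ * (B₂ - x₂) : ℝ) +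
        (σ₁ * Real.sqrt (1 - ρ ^ 2) * (B₂ - x₂) : ℝ) * Complex.I)
    let g : ℝ → ℝ := fun x₁ =>
      1 - Real.exp (2 * (B₁ - x₀₁) * (x₁ - B₁) / (σ₁ ^ 2 * t))
    Tendsto (fun x₁ => Real.sin (n * Real.pi * φ x₁ / α) / g x₁) (𝓝[<] B₁)
      (𝓝 ((-1 : ℝ) ^ (n + 1) * n * σ₁ * σ₂ * Real.pi * Real.sqrt (1 - ρ ^ 2) * t /
        (2 * α * (B₂ - x₂) * (B₁ - x₀₁)))) := by
  intro φ g
  have hpi := Real.pi_pos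
  set s : ℝ := Real.sqrt (1 - ρ ^ 2) with hsdef
  have hs2 : s ^ 2 = 1 - ρ ^ 2 := Real.sq_sqrt (by nlinarith [hρ.1, hρ.2])
  have hs : 0 < s := Real.sqrt_pos.2 (by nlinarith [hρ.1, hρ.2])
  set c : ℝ := B₂ - x₂ with hcdef
  have hc : 0 < c := sub_pos.2 hx₂
  set v : ℝ := σ₁ * s * c with hvdef
  have hv : 0 < v := by positivity
  -- φ in terms of arctan
  have hφ : ∀ x, φ x = Real.pi / 2 - Real.arctan ((σ₂ * (B₁ - x) - σ₁ * ρ * c) / v) :=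
    fun x => arg_aux _ _ hv
  -- value of φ at B₁
  have huB : (σ₂ * (B₁ - B₁) - σ₁ * ρ * c) / v = -ρ / s := by
    rw [hvdef]; field_simp; ring
  have hαarc : α = Real.pi / 2 - Real.arctan (-ρ / s) := by
    have h1 : α = Real.arccos (-ρ) := by rw [← hcos, Real.arccos_cos hα.1.le hα.2.le]
    have h2 : Real.arcsin (-ρ) = Real.arctan (-ρ / s) := by
      have h3 := Real.arcsin_eq_arctan (x := -ρ) ⟨by linarith [hρ.2], by linarith [hρ.1]⟩
      rwa [show 1 - (-ρ) ^ 2 = 1 - ρ ^ 2 by ring, ← hsdef] at h3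
    rw [h1, Real.arccos_eq_pi_div_two_sub_arcsin, h2]
  have hφB : Real.pi / 2 - Real.arctan ((σ₂ * (B₁ - B₁) - σ₁ * ρ * c) / v) = α := by
    rw [huB, ← hαarc]
  -- numerator function
  set N : ℝ → ℝ := fun x =>
    Real.sin (n * Real.pi * (Real.pi / 2 - Real.arctan ((σ₂ * (B₁ - x) - σ₁ * ρ * c) / v)) / α)
    with hNdef
  have hα0 : α ≠ 0 := ne_of_gt hα.1
  have hnpi : (n : ℝ) * Real.pi * α / α = n * Real.pi := by field_simp
  have hN0 : N B₁ = 0 := by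
    simp only [hNdef, hφB, hnpi]
    exact Real.sin_nat_mul_pi n
  -- derivative of N
  have hu : HasDerivAt (fun x => σ₂ * (B₁ - x) - σ₁ * ρ * c) (-σ₂) B₁ := by
    simpa using (((hasDerivAt_id B₁).const_sub B₁).const_mul σ₂).sub_const (σ₁ * ρ * c)
  have harc : HasDerivAt (fun x => Real.arctan ((σ₂ * (B₁ - x) - σ₁ * ρ * c) / v))
      (1 / (1 + ((σ₂ * (B₁ - B₁) - σ₁ * ρ * c) / v) ^ 2) * (-σ₂ / v)) B₁ := by
    have := (Real.hasDerivAt_arctan ((σ₂ * (B₁ - B₁) - σ₁ * ρ * c) / v)).comp B₁ (hu.div_const v)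
    simpa [Function.comp_def] using this
  have hw : HasDerivAt (fun x =>
      (n : ℝ) * Real.pi * (Real.pi / 2 - Real.arctan ((σ₂ * (B₁ - x) - σ₁ * ρ * c) / v)) / α)
      ((n : ℝ) * Real.pi * -(1 / (1 + ((σ₂ * (B₁ - B₁) - σ₁ * ρ * c) / v) ^ 2) * (-σ₂ / v)) / α)
      B₁ := ((harc.const_sub (Real.pi / 2)).const_mul ((n : ℝ) * Real.pi)).div_const α
  have hN : HasDerivAt N
      (Real.cos ((n : ℝ) * Real.pi * (Real.pi / 2 -
        Real.arctan ((σ₂ * (B₁ - B₁) - σ₁ * ρ * c) / v)) / α) *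
       ((n : ℝ) * Real.pi * -(1 / (1 + ((σ₂ * (B₁ - B₁) - σ₁ * ρ * c) / v) ^ 2) * (-σ₂ / v)) / α))
      B₁ := by
    have := (Real.hasDerivAt_sin ((n : ℝ) * Real.pi * (Real.pi / 2 -
      Real.arctan ((σ₂ * (B₁ - B₁) - σ₁ * ρ * c) / v)) / α)).comp B₁ hw
    simpa [Function.comp_def, hNdef] using this
  -- clean derivative value
  have hcosn : Real.cos ((n : ℝ) * Real.pi) = (-1 : ℝ) ^ n := by
    have := Real.cos_nat_mul_pi_sub 0 n
    simpa using this
  have hNval : Real.cos ((n : ℝ) * Real.pi * (Real.pi / 2 -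
        Real.arctan ((σ₂ * (B₁ - B₁) - σ₁ * ρ * c) / v)) / α) *
       ((n : ℝ) * Real.pi * -(1 / (1 + ((σ₂ * (B₁ - B₁) - σ₁ * ρ * c) / v) ^ 2) * (-σ₂ / v)) / α)
      = (-1 : ℝ) ^ n * ((n : ℝ) * Real.pi * σ₂ * s) / (α * σ₁ * c) := by
    rw [hφB, hnpi, hcosn, huB]
    have h1 : (1 : ℝ) + (-ρ / s) ^ 2 = 1 / s ^ 2 := by
      field_simp
      nlinarith [hs2]
    rw [h1, hvdef]
    field_simp
  rw [hNval] at hN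
  -- denominator
  have hginner : HasDerivAt (fun x => 2 * (B₁ - x₀₁) * (x - B₁) / (σ₁ ^ 2 * t))
      (2 * (B₁ - x₀₁) / (σ₁ ^ 2 * t)) B₁ := by
    simpa using (((hasDerivAt_id B₁).sub_const B₁).const_mul (2 * (B₁ - x₀₁))).div_const
      (σ₁ ^ 2 * t)
  have hg : HasDerivAt g (-(2 * (B₁ - x₀₁) / (σ₁ ^ 2 * t))) B₁ := by
    have h2 := ((Real.hasDerivAt_exp (2 * (B₁ - x₀₁) * (B₁ - B₁) / (σ₁ ^ 2 * t))).comp B₁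
      hginner).const_sub 1
    simpa [Function.comp] using h2
  have hg0 : g B₁ = 0 := by simp [g]
  have hg' : -(2 * (B₁ - x₀₁) / (σ₁ ^ 2 * t)) ≠ 0 := by
    have : 0 < 2 * (B₁ - x₀₁) / (σ₁ ^ 2 * t) := div_pos (by linarith) (by positivity)
    exact (neg_lt_zero.2 this).ne
  have hmain := lhopital_aux hN hg hN0 hg0 hg'
  have heqfun : ∀ x, Real.sin (n * Real.pi * φ x / α) / g x = N x / g x := by
    intro x
    rw [hφ x]
  have hval : (-1 : ℝ) ^ n * ((n : ℝ) * Real.pi * σ₂ * s) / (α * σ₁ * c) /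
      -(2 * (B₁ - x₀₁) / (σ₁ ^ 2 * t)) =
      (-1 : ℝ) ^ (n + 1) * n * σ₁ * σ₂ * Real.pi * s * t / (2 * α * c * (B₁ - x₀₁)) := by
    rw [pow_succ]
    have hB : B₁ - x₀₁ ≠ 0 := ne_of_gt (by linarith)
    field_simp
    ring
  rw [← hval]
  exact Tendsto.congr (fun x => (heqfun x).symm) hmain
end
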